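/- Let (X,s) be a strongly stratified sample of ℝ^N. (i) Fix u ∈ (0,1), K ≥ 0 and ρ > 0 with (u−ρ, u+ρ) ⊆ (0,1), and suppose d_H(X_{≤a}, X_{≤b}) ≤ K·|a−b| for all a,b ∈ (u−ρ, u+ρ). Then there is δ₀ > 0 such that whenever 0 < δ ≤ δ₀ and (X',s') is a strongly stratified sample δ-close to (X,s), one has max(d_H(X,X'), d_H(X_{≤u}, X'_{≤u})) ≤ (K+1)δ. (ii) Fix v = (v₁,v₂) ∈ Ω, K ≥ 0 and ρ > 0, and suppose d_H(X^a_b, X^{a'}_{b'}) ≤ K·max(|a−a'|, |b−b'|) for all a,a' ∈ (v₁−ρ, v₁+ρ) and b,b' ∈ (v₂−ρ, v₂+ρ) with a ≤ b and a' ≤ b'. Then there is δ₀ > 0 such that whenever 0 < δ ≤ δ₀ and (X',s') is δ-close to (X,s), each of the three componentwise Hausdorff distances between D_v(X,s) and D_v(X',s') is at most (K+1)δ. (That is, F_u and D_v are (K+1)-Lipschitz at (X,s) under the respective local Lipschitz hypotheses on the level sets.) -/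

import Mathlib

open Metric Set
open scoped ENNReal

namespace Stmt11

variable {N : ℕ}

/-- Sublevel set `X_{≤ b}`. -/
def sub (X : Set (EuclideanSpace ℝ (Fin N))) (s : EuclideanSpace ℝ (Fin N) → ℝ) (b : ℝ) :
    Set (EuclideanSpace ℝ (Fin N)) := {x | x ∈ X ∧ s x ≤ b}

/-- Superlevel set `X_{≥ a}`. -/
def supl (X : Set (EuclideanSpace ℝ (Fin N))) (s : EuclideanSpace ℝ (Fin N) → ℝ) (a : ℝ) :
    Set (EuclideanSpace ℝ (Fin N)) := {x | x ∈ X ∧ a ≤ s x}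

/-- Interval level set `X^a_b`. -/
def ival (X : Set (EuclideanSpace ℝ (Fin N))) (s : EuclideanSpace ℝ (Fin N) → ℝ) (a b : ℝ) :
    Set (EuclideanSpace ℝ (Fin N)) := {x | x ∈ X ∧ a ≤ s x ∧ s x ≤ b}

/-- The parameter space `Ω = {(v₁,v₂) : 0 < v₁ < v₂ < 1}`. -/
def Omega : Set (ℝ × ℝ) := {p | 0 < p.1 ∧ p.1 < p.2 ∧ p.2 < 1}

/-- The stratification diagram `D_v(X,s) = (X_{≤v₂}, X^{v₁}_{v₂}, X_{≥v₁})`. -/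
def Dv (X : Set (EuclideanSpace ℝ (Fin N))) (s : EuclideanSpace ℝ (Fin N) → ℝ) (v : ℝ × ℝ) :
    Set (EuclideanSpace ℝ (Fin N)) × Set (EuclideanSpace ℝ (Fin N)) ×
      Set (EuclideanSpace ℝ (Fin N)) :=
  (sub X s v.2, ival X s v.1 v.2, supl X s v.1)

/-- Maximum of the three componentwise Hausdorff distances between two diagram triples. -/
noncomputable def diagDist
    (D D' : Set (EuclideanSpace ℝ (Fin N)) × Set (EuclideanSpace ℝ (Fin N)) ×
      Set (EuclideanSpace ℝ (Fin N))) : ℝ≥0∞ :=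
  max (EMetric.hausdorffEdist D.1 D'.1)
    (max (EMetric.hausdorffEdist D.2.1 D'.2.1) (EMetric.hausdorffEdist D.2.2 D'.2.2))

/-- Two strongly stratified samples are `δ`-close. -/
def StronglyClose (δ : ℝ) (X X' : Set (EuclideanSpace ℝ (Fin N)))
    (s s' : EuclideanSpace ℝ (Fin N) → ℝ) : Prop :=
  (∀ x ∈ X, ∃ y ∈ X', ‖x - y‖ ≤ δ ∧ |s x - s' y| ≤ δ) ∧
  (∀ y ∈ X', ∃ x ∈ X, ‖x - y‖ ≤ δ ∧ |s x - s' y| ≤ δ)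


open EMetric in
private lemma jl' {α} [PseudoEMetricSpace α] {y x : α} {T : Set α} {δ K : ℝ}
    (hδ : 0 ≤ δ) (hK : 0 ≤ K)
    (h1 : edist y x ≤ ENNReal.ofReal δ)
    (h2 : infEdist x T ≤ ENNReal.ofReal (K * δ)) :
    infEdist y T ≤ ENNReal.ofReal ((K + 1) * δ) := by
  calc infEdist y T ≤ edist y x + infEdist x T := infEdist_le_edist_add_infEdist
    _ ≤ ENNReal.ofReal δ + ENNReal.ofReal (K * δ) := add_le_add h1 h2
    _ = ENNReal.ofReal ((K + 1) * δ) := by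
        rw [← ENNReal.ofReal_add hδ (by positivity)]; congr 1; ring

open EMetric in
private lemma lj' {α} [PseudoEMetricSpace α] {x : α} {B T : Set α} {δ K : ℝ}
    (hδ : 0 ≤ δ) (hK : 0 ≤ K)
    (h1 : infEdist x B ≤ ENNReal.ofReal (K * δ))
    (h2 : ∀ z ∈ B, infEdist z T ≤ ENNReal.ofReal δ) :
    infEdist x T ≤ ENNReal.ofReal ((K + 1) * δ) := by
  refine ENNReal.le_of_forall_pos_le_add fun ε hε _ => ?_
  have h1' : infEdist x B < ENNReal.ofReal (K * δ) + ε :=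
    h1.trans_lt (ENNReal.lt_add_right ENNReal.ofReal_ne_top
      (by exact_mod_cast hε.ne'))
  obtain ⟨z, hzB, hz⟩ := infEdist_lt_iff.mp h1'
  calc infEdist x T ≤ edist x z + infEdist z T := infEdist_le_edist_add_infEdist
    _ ≤ (ENNReal.ofReal (K * δ) + ε) + ENNReal.ofReal δ := add_le_add hz.le (h2 z hzB)
    _ = ENNReal.ofReal ((K + 1) * δ) + ε := by
        rw [show (K + 1) * δ = K * δ + δ by ring,
          ENNReal.ofReal_add (by positivity) hδ]
        ring

private lemma edist_of_norm' {E} [NormedAddCommGroup E] {x y : E} {δ : ℝ}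
    (h : ‖x - y‖ ≤ δ) : edist x y ≤ ENNReal.ofReal δ := by
  rw [edist_dist]; exact ENNReal.ofReal_le_ofReal (by rwa [dist_eq_norm])

/-- If the sublevel sets (resp. interval level sets) of `(X,s)` vary `K`-Lipschitz-ly in
the parameter near `u` (resp. near `v`), then the forgetful map `F_u` (resp. the diagram
map `D_v`) is `(K+1)`-Lipschitz at `(X,s)`. -/
theorem forgetful_and_diagram_lipschitz {N : ℕ}
    (X : Set (EuclideanSpace ℝ (Fin N))) (s : EuclideanSpace ℝ (Fin N) → ℝ)
    (hs : ∀ x ∈ X, s x ∈ Set.Icc (0 : ℝ) 1) :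
    (∀ u ∈ Set.Ioo (0 : ℝ) 1, ∀ K : ℝ, 0 ≤ K → ∀ ρ : ℝ, 0 < ρ →
      Set.Ioo (u - ρ) (u + ρ) ⊆ Set.Ioo (0 : ℝ) 1 →
      (∀ a ∈ Set.Ioo (u - ρ) (u + ρ), ∀ b ∈ Set.Ioo (u - ρ) (u + ρ),
        EMetric.hausdorffEdist (sub X s a) (sub X s b) ≤ ENNReal.ofReal (K * |a - b|)) →
      ∃ δ₀ : ℝ, 0 < δ₀ ∧ ∀ δ : ℝ, 0 < δ → δ ≤ δ₀ →
        ∀ (X' : Set (EuclideanSpace ℝ (Fin N))) (s' : EuclideanSpace ℝ (Fin N) → ℝ),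
          (∀ y ∈ X', s' y ∈ Set.Icc (0 : ℝ) 1) →
          StronglyClose δ X X' s s' →
          max (EMetric.hausdorffEdist X X')
            (EMetric.hausdorffEdist (sub X s u) (sub X' s' u)) ≤
              ENNReal.ofReal ((K + 1) * δ)) ∧
    (∀ v₁ v₂ : ℝ, (v₁, v₂) ∈ Omega → ∀ K : ℝ, 0 ≤ K → ∀ ρ : ℝ, 0 < ρ →
      (∀ a ∈ Set.Ioo (v₁ - ρ) (v₁ + ρ), ∀ a' ∈ Set.Ioo (v₁ - ρ) (v₁ + ρ),
       ∀ b ∈ Set.Ioo (v₂ - ρ) (v₂ + ρ), ∀ b' ∈ Set.Ioo (v₂ - ρ) (v₂ + ρ),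
        a ≤ b → a' ≤ b' →
        EMetric.hausdorffEdist (ival X s a b) (ival X s a' b') ≤
          ENNReal.ofReal (K * max |a - a'| |b - b'|)) →
      ∃ δ₀ : ℝ, 0 < δ₀ ∧ ∀ δ : ℝ, 0 < δ → δ ≤ δ₀ →
        ∀ (X' : Set (EuclideanSpace ℝ (Fin N))) (s' : EuclideanSpace ℝ (Fin N) → ℝ),
          (∀ y ∈ X', s' y ∈ Set.Icc (0 : ℝ) 1) →
          StronglyClose δ X X' s s' →
          diagDist (Dv X s (v₁, v₂)) (Dv X' s' (v₁, v₂)) ≤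
            ENNReal.ofReal ((K + 1) * δ)) := by
  constructor
  · -- Part (i): forgetful map
    intro u hu K hK ρ hρ _hsub hLip
    refine ⟨ρ / 2, by positivity, ?_⟩
    intro δ hδ hδ0 X' s' _hs' hclose
    obtain ⟨hXX', hX'X⟩ := hclose
    have hδρ : δ < ρ := lt_of_le_of_lt hδ0 (by linarith)
    have hδK : δ ≤ (K + 1) * δ := by nlinarith
    refine max_le ?_ ?_
    · refine EMetric.hausdorffEdist_le_of_infEdist ?_ ?_
      · intro x hx
        obtain ⟨y, hy, hn, _⟩ := hXX' x hx
        exact le_trans (EMetric.infEdist_le_edist_of_mem hy)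
          (le_trans (edist_of_norm' hn) (ENNReal.ofReal_le_ofReal hδK))
      · intro y hy
        obtain ⟨x, hx, hn, _⟩ := hX'X y hy
        refine le_trans (EMetric.infEdist_le_edist_of_mem hx) ?_
        rw [edist_comm]
        exact le_trans (edist_of_norm' hn) (ENNReal.ofReal_le_ofReal hδK)
    · refine EMetric.hausdorffEdist_le_of_infEdist ?_ ?_
      · rintro x ⟨hxX, hxu⟩
        have hH := hLip u ⟨by linarith, by linarith⟩ (u - δ) ⟨by linarith, by linarith⟩
        have hmem : x ∈ sub X s u := ⟨hxX, hxu⟩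
        have h1 : EMetric.infEdist x (sub X s (u - δ)) ≤ ENNReal.ofReal (K * δ) := by
          refine le_trans (EMetric.infEdist_le_hausdorffEdist_of_mem hmem)
            (le_trans hH ?_)
          exact ENNReal.ofReal_le_ofReal (le_of_eq (by
            rw [show u - (u - δ) = δ by ring, abs_of_nonneg hδ.le]))
        refine lj' hδ.le hK h1 ?_
        rintro z ⟨hzX, hz⟩
        obtain ⟨y, hyX', hn, hsn⟩ := hXX' z hzX
        obtain ⟨ha, hb⟩ := abs_le.mp hsn
        have hmem2 : y ∈ sub X' s' u := ⟨hyX', by linarith⟩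
        exact le_trans (EMetric.infEdist_le_edist_of_mem hmem2) (edist_of_norm' hn)
      · rintro y ⟨hyX', hyu⟩
        obtain ⟨x, hxX, hn, hsn⟩ := hX'X y hyX'
        obtain ⟨ha, hb⟩ := abs_le.mp hsn
        have hH := hLip (u + δ) ⟨by linarith, by linarith⟩ u ⟨by linarith, by linarith⟩
        refine jl' hδ.le hK (by rw [edist_comm]; exact edist_of_norm' hn) ?_
        have hmem : x ∈ sub X s (u + δ) := ⟨hxX, by linarith⟩
        refine le_trans (EMetric.infEdist_le_hausdorffEdist_of_mem hmem)
          (le_trans hH ?_)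
        exact ENNReal.ofReal_le_ofReal (le_of_eq (by
          rw [show u + δ - u = δ by ring, abs_of_nonneg hδ.le]))
  · -- Part (ii): diagram map
    intro v₁ v₂ hv K hK ρ hρ hLip
    obtain ⟨hv1, hv12, hv2⟩ := hv
    refine ⟨min (ρ / 2) ((v₂ - v₁) / 2), lt_min (by positivity) (by linarith), ?_⟩
    intro δ hδ hδ0 X' s' _hs' hclose
    obtain ⟨hXX', hX'X⟩ := hclose
    obtain ⟨hδ01, hδ02⟩ := le_min_iff.mp hδ0
    have hδρ : δ < ρ := by linarith
    have hδv : 2 * δ ≤ v₂ - v₁ := by linarith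
    have hδK : δ ≤ (K + 1) * δ := by nlinarith
    have hmem1 : v₁ ∈ Set.Ioo (v₁ - ρ) (v₁ + ρ) := ⟨by linarith, by linarith⟩
    have hmem1p : v₁ + δ ∈ Set.Ioo (v₁ - ρ) (v₁ + ρ) := ⟨by linarith, by linarith⟩
    have hmem1m : v₁ - δ ∈ Set.Ioo (v₁ - ρ) (v₁ + ρ) := ⟨by linarith, by linarith⟩
    have hmem2 : v₂ ∈ Set.Ioo (v₂ - ρ) (v₂ + ρ) := ⟨by linarith, by linarith⟩
    have hmem2p : v₂ + δ ∈ Set.Ioo (v₂ - ρ) (v₂ + ρ) := ⟨by linarith, by linarith⟩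
    have hmem2m : v₂ - δ ∈ Set.Ioo (v₂ - ρ) (v₂ + ρ) := ⟨by linarith, by linarith⟩
    have habs0 : |v₁ - v₁| = 0 := by rw [sub_self, abs_zero]
    have habs2 : |v₂ - v₂| = 0 := by rw [sub_self, abs_zero]
    simp only [diagDist, Dv]
    refine max_le ?_ (max_le ?_ ?_)
    · -- sub component at v₂
      refine EMetric.hausdorffEdist_le_of_infEdist ?_ ?_
      · rintro x ⟨hxX, hxv⟩
        rcases le_or_gt (s x) (v₂ - δ) with hc | hc
        · obtain ⟨y, hyX', hn, hsn⟩ := hXX' x hxX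
          obtain ⟨ha, hb⟩ := abs_le.mp hsn
          have hmem : y ∈ sub X' s' v₂ := ⟨hyX', by linarith⟩
          exact le_trans (EMetric.infEdist_le_edist_of_mem hmem)
            (le_trans (edist_of_norm' hn) (ENNReal.ofReal_le_ofReal hδK))
        · have hH := hLip v₁ hmem1 v₁ hmem1 v₂ hmem2 (v₂ - δ) hmem2m
            hv12.le (by linarith)
          have hmem : x ∈ ival X s v₁ v₂ := ⟨hxX, by linarith, hxv⟩
          have h1 : EMetric.infEdist x (ival X s v₁ (v₂ - δ)) ≤ ENNReal.ofReal (K * δ) := by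
            refine le_trans (EMetric.infEdist_le_hausdorffEdist_of_mem hmem)
              (le_trans hH ?_)
            refine ENNReal.ofReal_le_ofReal (mul_le_mul_of_nonneg_left ?_ hK)
            rw [habs0, show v₂ - (v₂ - δ) = δ by ring, abs_of_nonneg hδ.le]
            exact max_le hδ.le le_rfl
          refine lj' hδ.le hK h1 ?_
          rintro z ⟨hzX, _, hz2⟩
          obtain ⟨y, hyX', hn, hsn⟩ := hXX' z hzX
          obtain ⟨ha, hb⟩ := abs_le.mp hsn
          have hmem' : y ∈ sub X' s' v₂ := ⟨hyX', by linarith⟩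
          exact le_trans (EMetric.infEdist_le_edist_of_mem hmem') (edist_of_norm' hn)
      · rintro y ⟨hyX', hyv⟩
        obtain ⟨x, hxX, hn, hsn⟩ := hX'X y hyX'
        obtain ⟨ha, hb⟩ := abs_le.mp hsn
        refine jl' hδ.le hK (by rw [edist_comm]; exact edist_of_norm' hn) ?_
        rcases le_or_gt (s x) v₂ with hc | hc
        · have hmem : x ∈ sub X s v₂ := ⟨hxX, hc⟩
          exact (EMetric.infEdist_zero_of_mem hmem).trans_le (zero_le)
        · have hH := hLip v₁ hmem1 v₁ hmem1 (v₂ + δ) hmem2p v₂ hmem2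
            (by linarith) hv12.le
          have hmem : x ∈ ival X s v₁ (v₂ + δ) := ⟨hxX, by linarith, by linarith⟩
          have h1 : EMetric.infEdist x (ival X s v₁ v₂) ≤ ENNReal.ofReal (K * δ) := by
            refine le_trans (EMetric.infEdist_le_hausdorffEdist_of_mem hmem)
              (le_trans hH ?_)
            refine ENNReal.ofReal_le_ofReal (mul_le_mul_of_nonneg_left ?_ hK)
            rw [habs0, show v₂ + δ - v₂ = δ by ring, abs_of_nonneg hδ.le]
            exact max_le hδ.le le_rfl
          refine le_trans (EMetric.infEdist_anti ?_) h1
          rintro z ⟨hz, _, hzb⟩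
          exact ⟨hz, hzb⟩
    · -- ival component
      refine EMetric.hausdorffEdist_le_of_infEdist ?_ ?_
      · rintro x ⟨hxX, hx1, hx2⟩
        have hH := hLip v₁ hmem1 (v₁ + δ) hmem1p v₂ hmem2 (v₂ - δ) hmem2m
          hv12.le (by linarith)
        have hmem : x ∈ ival X s v₁ v₂ := ⟨hxX, hx1, hx2⟩
        have h1 : EMetric.infEdist x (ival X s (v₁ + δ) (v₂ - δ)) ≤
            ENNReal.ofReal (K * δ) := by
          refine le_trans (EMetric.infEdist_le_hausdorffEdist_of_mem hmem)
            (le_trans hH ?_)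
          refine ENNReal.ofReal_le_ofReal (mul_le_mul_of_nonneg_left ?_ hK)
          rw [show v₁ - (v₁ + δ) = -δ by ring, abs_neg,
            show v₂ - (v₂ - δ) = δ by ring, abs_of_nonneg hδ.le]
          exact max_le le_rfl le_rfl
        refine lj' hδ.le hK h1 ?_
        rintro z ⟨hzX, hz1, hz2⟩
        obtain ⟨y, hyX', hn, hsn⟩ := hXX' z hzX
        obtain ⟨ha, hb⟩ := abs_le.mp hsn
        have hmem' : y ∈ ival X' s' v₁ v₂ := ⟨hyX', by linarith, by linarith⟩
        exact le_trans (EMetric.infEdist_le_edist_of_mem hmem') (edist_of_norm' hn)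
      · rintro y ⟨hyX', hy1, hy2⟩
        obtain ⟨x, hxX, hn, hsn⟩ := hX'X y hyX'
        obtain ⟨ha, hb⟩ := abs_le.mp hsn
        refine jl' hδ.le hK (by rw [edist_comm]; exact edist_of_norm' hn) ?_
        have hH := hLip (v₁ - δ) hmem1m v₁ hmem1 (v₂ + δ) hmem2p v₂ hmem2
          (by linarith) hv12.le
        have hmem : x ∈ ival X s (v₁ - δ) (v₂ + δ) := ⟨hxX, by linarith, by linarith⟩
        refine le_trans (EMetric.infEdist_le_hausdorffEdist_of_mem hmem)
          (le_trans hH ?_)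
        refine ENNReal.ofReal_le_ofReal (mul_le_mul_of_nonneg_left ?_ hK)
        rw [show v₁ - δ - v₁ = -δ by ring, abs_neg,
          show v₂ + δ - v₂ = δ by ring, abs_of_nonneg hδ.le]
        exact max_le le_rfl le_rfl
    · -- supl component at v₁
      refine EMetric.hausdorffEdist_le_of_infEdist ?_ ?_
      · rintro x ⟨hxX, hxv⟩
        rcases le_or_gt (v₁ + δ) (s x) with hc | hc
        · obtain ⟨y, hyX', hn, hsn⟩ := hXX' x hxX
          obtain ⟨ha, hb⟩ := abs_le.mp hsn
          have hmem : y ∈ supl X' s' v₁ := ⟨hyX', by linarith⟩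
          exact le_trans (EMetric.infEdist_le_edist_of_mem hmem)
            (le_trans (edist_of_norm' hn) (ENNReal.ofReal_le_ofReal hδK))
        · have hH := hLip v₁ hmem1 (v₁ + δ) hmem1p v₂ hmem2 v₂ hmem2
            hv12.le (by linarith)
          have hmem : x ∈ ival X s v₁ v₂ := ⟨hxX, hxv, by linarith⟩
          have h1 : EMetric.infEdist x (ival X s (v₁ + δ) v₂) ≤ ENNReal.ofReal (K * δ) := by
            refine le_trans (EMetric.infEdist_le_hausdorffEdist_of_mem hmem)
              (le_trans hH ?_)
            refine ENNReal.ofReal_le_ofReal (mul_le_mul_of_nonneg_left ?_ hK)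
            rw [show v₁ - (v₁ + δ) = -δ by ring, abs_neg, habs2, abs_of_nonneg hδ.le]
            exact max_le le_rfl hδ.le
          refine lj' hδ.le hK h1 ?_
          rintro z ⟨hzX, hz1, _⟩
          obtain ⟨y, hyX', hn, hsn⟩ := hXX' z hzX
          obtain ⟨ha, hb⟩ := abs_le.mp hsn
          have hmem' : y ∈ supl X' s' v₁ := ⟨hyX', by linarith⟩
          exact le_trans (EMetric.infEdist_le_edist_of_mem hmem') (edist_of_norm' hn)
      · rintro y ⟨hyX', hyv⟩
        obtain ⟨x, hxX, hn, hsn⟩ := hX'X y hyX'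
        obtain ⟨ha, hb⟩ := abs_le.mp hsn
        refine jl' hδ.le hK (by rw [edist_comm]; exact edist_of_norm' hn) ?_
        rcases le_or_gt v₁ (s x) with hc | hc
        · have hmem : x ∈ supl X s v₁ := ⟨hxX, hc⟩
          exact (EMetric.infEdist_zero_of_mem hmem).trans_le (zero_le)
        · have hH := hLip (v₁ - δ) hmem1m v₁ hmem1 v₂ hmem2 v₂ hmem2
            (by linarith) hv12.le
          have hmem : x ∈ ival X s (v₁ - δ) v₂ := ⟨hxX, by linarith, by linarith⟩
          have h1 : EMetric.infEdist x (ival X s v₁ v₂) ≤ ENNReal.ofReal (K * δ) := by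
            refine le_trans (EMetric.infEdist_le_hausdorffEdist_of_mem hmem)
              (le_trans hH ?_)
            refine ENNReal.ofReal_le_ofReal (mul_le_mul_of_nonneg_left ?_ hK)
            rw [show v₁ - δ - v₁ = -δ by ring, abs_neg, habs2, abs_of_nonneg hδ.le]
            exact max_le le_rfl hδ.le
          refine le_trans (EMetric.infEdist_anti ?_) h1
          rintro z ⟨hz, hza, _⟩
          exact ⟨hz, hza⟩

end Stmt11
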